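/- Let G = (V, E) be a finite simple claw-free graph and let K_s be a simplicial clique of G. Let G★ be the graph obtained from G by adding one new vertex ★ adjacent exactly to the vertices of K_s (and to no other vertex). Then G★ is claw-free, and ★ is a simplicial vertex of G★, i.e., the neighborhood of ★ in G★ is a clique. (Claim proved in Section IV.C.) -/
import Mathlib


universe u

/-- `G` is claw-free: no vertex has three pairwise distinct, pairwise non-adjacent neighbors. -/
def ClawFree {V : Type u} (G : SimpleGraph V) : Prop :=
  ¬ ∃ c x y z : V, x ≠ y ∧ x ≠ z ∧ y ≠ z ∧
    G.Adj c x ∧ G.Adj c y ∧ G.Adj c z ∧ ¬ G.Adj x y ∧ ¬ G.Adj x z ∧ ¬ G.Adj y z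

/-- `K` is a simplicial clique of `G`: a clique such that, for every `j ∈ K`, the set of
neighbors of `j` outside `K` is a clique. -/
def IsSimplicialClique {V : Type u} (G : SimpleGraph V) (K : Finset V) : Prop :=
  (∀ u ∈ K, ∀ v ∈ K, u ≠ v → G.Adj u v) ∧
    ∀ j ∈ K, ∀ u v : V, u ∉ K → v ∉ K → u ≠ v → G.Adj j u → G.Adj j v → G.Adj u v

/-- The graph `G★` on `Option V`, obtained from `G` by adding one new vertex `none` adjacent
exactly to the vertices of `K` (and to no other vertex): two old vertices are adjacent iff
they are adjacent in `G`, and `none` is adjacent to `some u` iff `u ∈ K`. -/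
def starGraph {V : Type u} (G : SimpleGraph V) (K : Finset V) : SimpleGraph (Option V) :=
  SimpleGraph.fromRel (fun x y =>
    (∃ u v : V, x = some u ∧ y = some v ∧ G.Adj u v) ∨
      (∃ u : V, x = some u ∧ y = none ∧ u ∈ K))


lemma starGraph_adj_some {V : Type u} (G : SimpleGraph V) (K : Finset V) (u v : V) :
    (starGraph G K).Adj (some u) (some v) ↔ G.Adj u v := by
  simp only [starGraph, SimpleGraph.fromRel_adj]
  constructor
  · rintro ⟨hne, h | h⟩
    · rcases h with ⟨a, b, ha, hb, hab⟩ | ⟨a, ha, hb, _⟩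
      · cases ha; cases hb; exact hab
      · cases hb
    · rcases h with ⟨a, b, ha, hb, hab⟩ | ⟨a, ha, hb, _⟩
      · cases ha; cases hb; exact hab.symm
      · cases hb
  · intro h
    exact ⟨by simpa using h.ne, Or.inl (Or.inl ⟨u, v, rfl, rfl, h⟩)⟩

lemma starGraph_adj_none {V : Type u} (G : SimpleGraph V) (K : Finset V) (u : V) :
    (starGraph G K).Adj none (some u) ↔ u ∈ K := by
  simp only [starGraph, SimpleGraph.fromRel_adj]
  constructor
  · rintro ⟨hne, h | h⟩
    · rcases h with ⟨a, b, ha, _, _⟩ | ⟨a, ha, _, _⟩ <;> cases ha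
    · rcases h with ⟨a, b, _, hb, _⟩ | ⟨a, ha, _, hm⟩
      · cases hb
      · cases ha; exact hm
  · intro h
    refine ⟨by simp, Or.inr (Or.inr ⟨u, rfl, by simp, h⟩)⟩

lemma starGraph_adj_none' {V : Type u} (G : SimpleGraph V) (K : Finset V) (u : V) :
    (starGraph G K).Adj (some u) none ↔ u ∈ K := by
  rw [(starGraph G K).adj_comm]; exact starGraph_adj_none G K u

/-- The claim proved in Section IV.C: attaching a new vertex to a simplicial clique of a
claw-free graph yields a claw-free graph in which the new vertex is simplicial (its
neighborhood is a clique). -/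
theorem starGraph_clawFree_and_simplicial {V : Type u} [DecidableEq V]
    (G : SimpleGraph V) (hcf : ClawFree G) (K : Finset V) (hK : IsSimplicialClique G K) :
    ClawFree (starGraph G K) ∧
      ∀ x y : Option V, (starGraph G K).Adj none x → (starGraph G K).Adj none y →
        x ≠ y → (starGraph G K).Adj x y := by
  obtain ⟨hcl, hsimp⟩ := hK
  have hnn : ¬ (starGraph G K).Adj none none := SimpleGraph.irrefl _
  constructor
  · rintro ⟨c, x, y, z, hxy, hxz, hyz, hcx, hcy, hcz, hnxy, hnxz, hnyz⟩
    -- c = none case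
    match c, x, y, z with
    | none, x, y, z =>
      obtain ⟨a, rfl⟩ : ∃ a, x = some a := by cases x with
        | none => exact absurd hcx hnn | some a => exact ⟨a, rfl⟩
      obtain ⟨b, rfl⟩ : ∃ b, y = some b := by cases y with
        | none => exact absurd hcy hnn | some b => exact ⟨b, rfl⟩
      rw [starGraph_adj_none] at hcx hcy
      exact hnxy ((starGraph_adj_some G K a b).2
        (hcl a hcx b hcy (by simpa using hxy)))
    | some c, none, y, z =>
      obtain ⟨b, rfl⟩ : ∃ b, y = some b := by cases y with
        | none => exact absurd hxy (by simp) | some b => exact ⟨b, rfl⟩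
      obtain ⟨d, rfl⟩ : ∃ d, z = some d := by cases z with
        | none => exact absurd hxz (by simp) | some d => exact ⟨d, rfl⟩
      simp only [starGraph_adj_none, starGraph_adj_none', starGraph_adj_some] at hcx hcy hcz hnxy hnxz
      exact hnyz ((starGraph_adj_some G K b d).2
        (hsimp c hcx b d hnxy hnxz (by simpa using hyz) hcy hcz))
    | some c, x, none, z =>
      obtain ⟨a, rfl⟩ : ∃ a, x = some a := by cases x with
        | none => exact absurd hxy (by simp) | some a => exact ⟨a, rfl⟩
      obtain ⟨d, rfl⟩ : ∃ d, z = some d := by cases z with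
        | none => exact absurd hyz (by simp) | some d => exact ⟨d, rfl⟩
      simp only [starGraph_adj_none, starGraph_adj_none', starGraph_adj_some] at hcx hcy hcz hnxy hnyz
      exact hnxz ((starGraph_adj_some G K a d).2
        (hsimp c hcy a d hnxy hnyz (by simpa using hxz) hcx hcz))
    | some c, x, y, none =>
      obtain ⟨a, rfl⟩ : ∃ a, x = some a := by cases x with
        | none => exact absurd hxz (by simp) | some a => exact ⟨a, rfl⟩
      obtain ⟨b, rfl⟩ : ∃ b, y = some b := by cases y with
        | none => exact absurd hyz (by simp) | some b => exact ⟨b, rfl⟩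
      simp only [starGraph_adj_none, starGraph_adj_none', starGraph_adj_some] at hcx hcy hcz hnxz hnyz
      exact hnxy ((starGraph_adj_some G K a b).2
        (hsimp c hcz a b hnxz hnyz (by simpa using hxy) hcx hcy))
    | some c, some a, some b, some d =>
      rw [starGraph_adj_some] at hcx hcy hcz
      rw [starGraph_adj_some] at hnxy hnxz hnyz
      exact hcf ⟨c, a, b, d, by simpa using hxy, by simpa using hxz,
        by simpa using hyz, hcx, hcy, hcz, hnxy, hnxz, hnyz⟩
  · intro x y hx hy hxy
    obtain ⟨a, rfl⟩ : ∃ a, x = some a := by cases x with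
      | none => exact absurd hx hnn | some a => exact ⟨a, rfl⟩
    obtain ⟨b, rfl⟩ : ∃ b, y = some b := by cases y with
      | none => exact absurd hy hnn | some b => exact ⟨b, rfl⟩
    rw [starGraph_adj_none] at hx hy
    exact (starGraph_adj_some G K a b).2 (hcl a hx b hy (by simpa using hxy))
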